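/- Let * : Ord × Ord → Ord be the naive transfinite extension of the second hyperoperation, defined by transfinite recursion on the second argument: α * 0 = 0; α * (β+1) = α + (α * β); and α * β = sup{α * γ : γ < β} for β a limit ordinal. Then the operation is eventually constant in its second argument: for every ordinal α and every ordinal β ≥ ω, α * β = α · ω, where · is standard ordinal multiplication. -/

import Mathlib

open Ordinal

/-- The naive transfinite extension of the second hyperoperation:
`α * 0 = 0`, `α * (β + 1) = α + (α * β)`, and `α * β = sup {α * γ : γ < β}`
for `β` a limit ordinal. -/
noncomputable def naiveMul (α β : Ordinal) : Ordinal :=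
  Ordinal.limitRecOn β 0 (fun _ IH => α + IH)
    (fun β _ IH => ⨆ γ : Set.Iio β, IH γ.1 γ.2)

universe u v

theorem naiveMul_zero (α : Ordinal.{u}) : naiveMul α (0 : Ordinal.{v}) = 0 := by
  simp [naiveMul]

theorem naiveMul_succ (α : Ordinal.{u}) (β : Ordinal.{v}) :
    naiveMul α (β + 1) = α + naiveMul α β := by
  rw [naiveMul, ← Order.succ_eq_add_one, Ordinal.limitRecOn_succ]
  rfl

theorem naiveMul_limit (α : Ordinal.{u}) (β : Ordinal.{v}) (h : Order.IsSuccLimit β) :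
    naiveMul α β = ⨆ γ : Set.Iio β, naiveMul α γ.1 := by
  rw [naiveMul, Ordinal.limitRecOn_limit _ _ _ _ h]
  rfl

theorem naiveMul_natCast (α : Ordinal.{u}) (n : ℕ) :
    naiveMul α ((n : Ordinal.{v})) = α * (n : Ordinal.{u}) := by
  induction n with
  | zero => simpa using naiveMul_zero α
  | succ n ih =>
    push_cast
    rw [naiveMul_succ, ih]
    calc α + α * n = α * 1 + α * n := by rw [mul_one]
      _ = α * (1 + (n : Ordinal)) := (mul_add _ _ _).symm
      _ = α * ((n : Ordinal) + 1) := by norm_cast; rw [Nat.add_comm]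

theorem aux_bound (α : Ordinal.{u}) (β : Ordinal.{v})
    (IH : ∀ γ < β, ω ≤ γ → naiveMul α γ = α * ω) :
    ∀ γ : Set.Iio β, naiveMul α γ.1 ≤ α * ω := by
  rintro ⟨γ, hγ⟩
  dsimp only
  rcases lt_or_ge γ ω with hlt | hle
  · obtain ⟨n, rfl⟩ := Ordinal.lt_omega0.1 hlt
    rw [naiveMul_natCast α n]
    exact mul_le_mul_right (Ordinal.nat_lt_omega0 n).le α
  · exact (IH γ hγ hle).le

theorem aux_le (α : Ordinal.{u}) (β : Ordinal.{v}) (h : Order.IsSuccLimit β)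
    (IH : ∀ γ < β, ω ≤ γ → naiveMul α γ = α * ω) :
    naiveMul α β ≤ α * ω := by
  rw [naiveMul_limit α β h]
  have : Nonempty (Set.Iio β) := ⟨⟨0, h.pos⟩⟩
  exact ciSup_le (aux_bound α β IH)

theorem aux_ge (α : Ordinal.{u}) (β : Ordinal.{v}) (h : Order.IsSuccLimit β) (hβ : ω ≤ β)
    (IH : ∀ γ < β, ω ≤ γ → naiveMul α γ = α * ω) :
    α * ω ≤ naiveMul α β := by
  have hbdd : BddAbove (Set.range fun δ : Set.Iio β => naiveMul α δ.1) :=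
    ⟨α * ω, by rintro x ⟨δ, rfl⟩; exact aux_bound α β IH δ⟩
  rw [naiveMul_limit α β h]
  refine (Ordinal.mul_le_iff_of_isSuccLimit Ordinal.isSuccLimit_omega0).2 fun γ hγ => ?_
  obtain ⟨n, rfl⟩ := Ordinal.lt_omega0.1 hγ
  have hγβ : ((n : Ordinal.{v})) < β := (Ordinal.nat_lt_omega0 n).trans_le hβ
  calc α * n = naiveMul α ((n : Ordinal.{v})) := (naiveMul_natCast α n).symm
    _ ≤ _ := le_ciSup hbdd (⟨_, hγβ⟩ : Set.Iio β)

/-- The naive transfinite extension of the second hyperoperation is eventually constant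
in its second argument: for every ordinal `α` and every `β ≥ ω`, `α * β = α · ω`,
where `·` is standard ordinal multiplication. -/
theorem naiveMul_eq_mul_omega0 (α β : Ordinal) (hβ : ω ≤ β) :
    naiveMul α β = α * ω := by
  induction β using Ordinal.limitRecOn with
  | zero => exact absurd hβ Ordinal.omega0_pos.not_ge
  | add_one β ih =>
    have hβ' : ω ≤ β := by
      rcases hβ.lt_or_eq with h | h
      · exact Order.lt_add_one_iff.1 h
      · exact absurd (h ▸ Ordinal.isSuccLimit_omega0) (Order.not_isSuccLimit_add_one β)
    rw [naiveMul_succ, ih hβ']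
    conv_rhs => rw [← Ordinal.one_add_omega0, mul_add, mul_one]
  | limit β h ih =>
    exact le_antisymm (aux_le α β h (fun γ hγ hωγ => ih γ hγ hωγ)) (aux_ge α β h hβ (fun γ hγ hωγ => ih γ hγ hωγ))
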